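/- Let U be a finite universe of size n, S ⊆ 2^U a set family, k a positive integer, and for X ⊆ U let s[X] be the number of k-tuples (S₁,...,S_k) ∈ S^k with ⋃ᵢ Sᵢ = X. Let z[X] = |{S ∈ S : S ⊆ X}|. Then for every Y ⊆ U, z[Y]^k = ∑_{X ⊆ Y} s[X]. Consequently, ∑_{X ⊆ U} (-1)^{|U \ X|} z[X]^k = s[U], the number of ordered k-covers of U from S. -/

import Mathlib

/-- Inclusion-exclusion for Set Cover: with
    s[X] = #{(S₁,...,S_k) ∈ 𝒮^k : ⋃ᵢ Sᵢ = X} and z[X] = #{S ∈ 𝒮 : S ⊆ X},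
    we have z[Y]^k = ∑_{X ⊆ Y} s[X] for all Y, and consequently
    ∑_{X ⊆ U} (-1)^{|U∖X|} z[X]^k = s[U], the number of ordered k-covers. -/
theorem set_cover_inclusion_exclusion {α : Type} [Fintype α] [DecidableEq α]
    (S : Finset (Finset α)) (k : ℕ) (hk : 1 ≤ k) :
    (∀ Y : Finset α,
      ((S.filter fun T => T ⊆ Y).card) ^ k =
        ∑ X ∈ Y.powerset,
          (Finset.univ.filter fun f : Fin k → Finset α =>
            (∀ i, f i ∈ S) ∧ Finset.univ.sup f = X).card) ∧
    (∑ X ∈ (Finset.univ : Finset α).powerset,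
        (-1 : ℤ) ^ ((Finset.univ \ X).card) * ((S.filter fun T => T ⊆ X).card : ℤ) ^ k
      = ((Finset.univ.filter fun f : Fin k → Finset α =>
            (∀ i, f i ∈ S) ∧ Finset.univ.sup f = Finset.univ).card : ℤ)) := by
  classical
  have part1 : ∀ Y : Finset α,
      ((S.filter fun T => T ⊆ Y).card) ^ k =
        ∑ X ∈ Y.powerset,
          (Finset.univ.filter fun f : Fin k → Finset α =>
            (∀ i, f i ∈ S) ∧ Finset.univ.sup f = X).card := by
    intro Y
    have hs : (Finset.univ.filter fun f : Fin k → Finset α =>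
        (∀ i, f i ∈ S) ∧ Finset.univ.sup f ⊆ Y)
        = Fintype.piFinset (fun _ : Fin k => S.filter fun T => T ⊆ Y) := by
      ext f
      simp only [Finset.mem_filter, Finset.mem_univ, true_and, Fintype.mem_piFinset]
      constructor
      · rintro ⟨h1, h2⟩ i; exact ⟨h1 i, (Finset.le_sup (Finset.mem_univ i)).trans h2⟩
      · intro h; exact ⟨fun i => (h i).1, Finset.sup_le fun i _ => (h i).2⟩
    have hcard : (Finset.univ.filter fun f : Fin k → Finset α =>
        (∀ i, f i ∈ S) ∧ Finset.univ.sup f ⊆ Y).card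
        = ((S.filter fun T => T ⊆ Y).card) ^ k := by
      rw [hs, Fintype.card_piFinset]
      simp
    rw [← hcard]
    rw [Finset.card_eq_sum_card_fiberwise (f := fun f : Fin k → Finset α => Finset.univ.sup f)
      (t := Y.powerset) (by intro f hf; simp only [Finset.coe_filter, Set.mem_setOf_eq] at hf
                            exact Finset.mem_powerset.2 hf.2.2)]
    apply Finset.sum_congr rfl
    intro X hX
    congr 1
    ext f
    simp only [Finset.filter_filter, Finset.mem_filter, Finset.mem_univ, true_and]
    constructor
    · rintro ⟨⟨h1, _⟩, h3⟩; exact ⟨h1, h3⟩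
    · rintro ⟨h1, h3⟩; exact ⟨⟨h1, h3 ▸ Finset.mem_powerset.1 hX⟩, h3⟩
  refine ⟨part1, ?_⟩
  set g : Finset α → ℤ := fun X =>
    ((Finset.univ.filter fun f : Fin k → Finset α =>
      (∀ i, f i ∈ S) ∧ Finset.univ.sup f = X).card : ℤ) with hg
  have step : ∑ X ∈ (Finset.univ : Finset α).powerset,
      (-1 : ℤ) ^ ((Finset.univ \ X).card) * ((S.filter fun T => T ⊆ X).card : ℤ) ^ k
      = ∑ X ∈ (Finset.univ : Finset α).powerset,
          ∑ W ∈ X.powerset, (-1 : ℤ) ^ ((Finset.univ \ X).card) * g W := by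
    apply Finset.sum_congr rfl
    intro X _
    rw [← Finset.mul_sum]
    congr 1
    simp only [hg]
    exact_mod_cast part1 X
  rw [step]
  rw [Finset.sum_comm' (t' := (Finset.univ : Finset α).powerset)
    (s' := fun W => (Finset.univ : Finset α).powerset.filter fun X => W ⊆ X)
    (by intro X W
        simp only [Finset.mem_powerset, Finset.mem_filter]
        tauto)]
  have inner : ∀ W ∈ (Finset.univ : Finset α).powerset,
      ∑ X ∈ (Finset.univ : Finset α).powerset.filter (fun X => W ⊆ X),
        (-1 : ℤ) ^ ((Finset.univ \ X).card) * g W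
      = (if W = Finset.univ then 1 else 0) * g W := by
    intro W _
    rw [← Finset.sum_mul]
    congr 1
    have hbij : ∑ X ∈ (Finset.univ : Finset α).powerset.filter (fun X => W ⊆ X),
        (-1 : ℤ) ^ ((Finset.univ \ X).card)
        = ∑ C ∈ (Finset.univ \ W).powerset, (-1 : ℤ) ^ C.card := by
      apply Finset.sum_nbij' (i := fun X => Finset.univ \ X) (j := fun C => Finset.univ \ C)
      · intro X hX
        simp only [Finset.mem_filter, Finset.mem_powerset] at hX ⊢
        exact Finset.sdiff_subset_sdiff (le_refl _) hX.2
      · intro C hC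
        simp only [Finset.mem_powerset] at hC
        simp only [Finset.mem_filter, Finset.mem_powerset]
        refine ⟨Finset.sdiff_subset, ?_⟩
        intro x hx
        simp only [Finset.mem_sdiff, Finset.mem_univ, true_and]
        intro hxC
        exact (Finset.mem_sdiff.1 (hC hxC)).2 hx
      · intro X hX
        simp only [Finset.mem_filter, Finset.mem_powerset] at hX
        exact Finset.sdiff_sdiff_eq_self hX.1
      · intro C hC
        simp only [Finset.mem_powerset] at hC
        exact Finset.sdiff_sdiff_eq_self (fun x _ => Finset.mem_univ x)
      · intro X _; rfl
    rw [hbij, Finset.sum_powerset_neg_one_pow_card]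
    rcases eq_or_ne W Finset.univ with h | h
    · simp [h]
    · have : Finset.univ \ W ≠ ∅ := by
        simp [Finset.sdiff_eq_empty_iff_subset, Finset.univ_subset_iff]
        exact h
      simp [h, this.symm]
  rw [Finset.sum_congr rfl inner]
  rw [Finset.sum_eq_single Finset.univ]
  · simp [hg]
  · intro W _ hW; simp [hW]
  · intro h; exact absurd (Finset.mem_powerset.2 (le_refl _)) h
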